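/- Let (X,d) be a metric space and let ν be a Borel measure on X whose support is all of X and which is finite on bounded sets, satisfying the Bishop–Gromov inequality with parameters (K,N), where K ≤ 0 and 1 < N < ∞. Let ε > 0 and let p₁,…,p_{n₀} be distinct points of X such that the open balls B(p_k, ε/2), k = 1,…,n₀, are pairwise disjoint. Then for every x ∈ X, the number of indices j ∈ {1,…,n₀} with B(x,ε) ∩ B(p_j,ε) ≠ ∅ is at most (∫₀^{9ε/2} S_K^N(t) dt) / (∫₀^{ε/2} S_K^N(t) dt). -/

import Mathlib

open MeasureTheory Metric

/-- The model volume density `S_K^N` for `K ≤ 0`, `1 < N < ∞`. -/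
noncomputable def SKN (K N t : ℝ) : ℝ :=
  if K = 0 then t ^ (N - 1)
  else Real.sinh (Real.sqrt (|K| / (N - 1)) * t) ^ (N - 1)

/-- A Borel measure `ν` of full support satisfies the Bishop–Gromov inequality with
parameters `(K, N)` if for every `x` the function
`r ↦ ν(B(x,r)) / ∫₀^r S_K^N(t) dt` is nonincreasing on `(0, ∞)`. -/
def BishopGromov {X : Type*} [MetricSpace X] [MeasurableSpace X]
    (ν : Measure X) (K N : ℝ) : Prop :=
  ∀ x : X, AntitoneOn
    (fun r => (ν (ball x r)).toReal / ∫ t in (0:ℝ)..r, SKN K N t) (Set.Ioi 0)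

lemma SKN_pos {K N : ℝ} (hK : K ≤ 0) (hN : 1 < N) {t : ℝ} (ht : 0 < t) :
    0 < SKN K N t := by
  unfold SKN
  by_cases h : K = 0
  · rw [if_pos h]; exact Real.rpow_pos_of_pos ht _
  · rw [if_neg h]
    exact Real.rpow_pos_of_pos (Real.sinh_pos_iff.2 (mul_pos
      (Real.sqrt_pos.2 (div_pos (abs_pos.2 h) (by linarith))) ht)) _

lemma SKN_continuous {K N : ℝ} (hN : 1 < N) : Continuous (SKN K N) := by
  unfold SKN
  by_cases h : K = 0
  · simp only [if_pos h]
    exact continuous_iff_continuousAt.2 fun t =>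
      Real.continuousAt_rpow_const _ _ (Or.inr (by linarith))
  · simp only [if_neg h]
    exact continuous_iff_continuousAt.2 fun t =>
      (Real.continuousAt_rpow_const _ _ (Or.inr (by linarith))).comp
        ((Real.continuous_sinh.comp (continuous_const.mul continuous_id)).continuousAt)

lemma SKN_integral_pos {K N : ℝ} (hK : K ≤ 0) (hN : 1 < N) {r : ℝ} (hr : 0 < r) :
    0 < ∫ t in (0:ℝ)..r, SKN K N t :=
  intervalIntegral.intervalIntegral_pos_of_pos_on
    ((SKN_continuous hN).intervalIntegrable _ _)
    (fun t ht => SKN_pos hK hN ht.1) hr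

theorem stmt_1 {X : Type*} [MetricSpace X] [MeasurableSpace X] [BorelSpace X]
    (ν : Measure X)
    (hfull : ∀ x : X, ∀ r > (0:ℝ), 0 < ν (ball x r))
    (hbdd : ∀ s : Set X, Bornology.IsBounded s → ν s < ⊤)
    (K N : ℝ) (hK : K ≤ 0) (hN : 1 < N)
    (hBG : BishopGromov ν K N)
    (ε : ℝ) (hε : 0 < ε)
    (n₀ : ℕ) (p : Fin n₀ → X) (hinj : Function.Injective p)
    (hdisj : Pairwise fun i j =>
      Disjoint (ball (p i) (ε / 2)) (ball (p j) (ε / 2)))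
    (x : X) :
    ({j : Fin n₀ | (ball x ε ∩ ball (p j) ε).Nonempty}.ncard : ℝ) ≤
      (∫ t in (0:ℝ)..(9 * ε / 2), SKN K N t) / ∫ t in (0:ℝ)..(ε / 2), SKN K N t := by
  set a := ∫ t in (0:ℝ)..(ε / 2), SKN K N t with ha_def
  set b := ∫ t in (0:ℝ)..(9 * ε / 2), SKN K N t with hb_def
  have ha : 0 < a := SKN_integral_pos hK hN (by linarith)
  have hb : 0 < b := SKN_integral_pos hK hN (by linarith)
  set v := (ν (ball x (5 * ε / 2))).toReal with hv_def
  have hvlt : ν (ball x (5 * ε / 2)) < ⊤ := hbdd _ isBounded_ball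
  have hvpos : 0 < v :=
    ENNReal.toReal_pos (hfull x _ (by linarith)).ne' hvlt.ne
  set J := {j : Fin n₀ | (ball x ε ∩ ball (p j) ε).Nonempty} with hJ
  have hJfin : J.Finite := Set.toFinite J
  -- per-element bound
  have key : ∀ j ∈ hJfin.toFinset, v * (a / b) ≤ (ν (ball (p j) (ε / 2))).toReal := by
    intro j hj
    rw [Set.Finite.mem_toFinset] at hj
    obtain ⟨y, hy1, hy2⟩ := hj
    rw [mem_ball] at hy1 hy2
    have hd : dist x (p j) < 2 * ε := by
      have h1 := dist_triangle x y (p j)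
      have h2 : dist x y = dist y x := dist_comm _ _
      linarith
    have hsub : ball x (5 * ε / 2) ⊆ ball (p j) (9 * ε / 2) := by
      intro z hz
      rw [mem_ball] at hz ⊢
      have := dist_triangle z x (p j)
      linarith
    have hmono : v ≤ (ν (ball (p j) (9 * ε / 2))).toReal :=
      ENNReal.toReal_mono (hbdd _ isBounded_ball).ne (measure_mono hsub)
    have hbg := hBG (p j) (Set.mem_Ioi.2 (show (0:ℝ) < ε / 2 by linarith))
      (Set.mem_Ioi.2 (show (0:ℝ) < 9 * ε / 2 by linarith)) (by linarith)
    simp only at hbg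
    calc v * (a / b) ≤ (ν (ball (p j) (9 * ε / 2))).toReal * (a / b) := by
          apply mul_le_mul_of_nonneg_right hmono
          positivity
      _ = ((ν (ball (p j) (9 * ε / 2))).toReal / b) * a := by ring
      _ ≤ ((ν (ball (p j) (ε / 2))).toReal / a) * a :=
          mul_le_mul_of_nonneg_right hbg ha.le
      _ = (ν (ball (p j) (ε / 2))).toReal := div_mul_cancel₀ _ ha.ne'
  -- sum bound
  have hsum : ∑ j ∈ hJfin.toFinset, (ν (ball (p j) (ε / 2))).toReal ≤ v := by
    have hsub : ∀ j ∈ hJfin.toFinset, ball (p j) (ε / 2) ⊆ ball x (5 * ε / 2) := by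
      intro j hj
      rw [Set.Finite.mem_toFinset] at hj
      obtain ⟨y, hy1, hy2⟩ := hj
      rw [mem_ball] at hy1 hy2
      intro z hz
      rw [mem_ball] at hz ⊢
      have h1 := dist_triangle z (p j) x
      have h2 := dist_triangle (p j) y x
      have h3 : dist (p j) y = dist y (p j) := dist_comm _ _
      linarith
    have hunion : ν (⋃ j ∈ hJfin.toFinset, ball (p j) (ε / 2))
        = ∑ j ∈ hJfin.toFinset, ν (ball (p j) (ε / 2)) :=
      measure_biUnion_finset
        (fun i _ j _ hij => hdisj hij)
        (fun j _ => measurableSet_ball)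
    have hle : ∑ j ∈ hJfin.toFinset, ν (ball (p j) (ε / 2)) ≤ ν (ball x (5 * ε / 2)) := by
      rw [← hunion]
      exact measure_mono (Set.iUnion₂_subset hsub)
    calc ∑ j ∈ hJfin.toFinset, (ν (ball (p j) (ε / 2))).toReal
        = (∑ j ∈ hJfin.toFinset, ν (ball (p j) (ε / 2))).toReal :=
          (ENNReal.toReal_sum (fun j _ => (hbdd _ isBounded_ball).ne)).symm
      _ ≤ v := ENNReal.toReal_mono hvlt.ne hle
  have hcard : (J.ncard : ℝ) * (v * (a / b)) ≤ v := by
    calc (J.ncard : ℝ) * (v * (a / b))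
        = ∑ _j ∈ hJfin.toFinset, v * (a / b) := by
          rw [Finset.sum_const, nsmul_eq_mul, Set.ncard_eq_toFinset_card _ hJfin]
      _ ≤ ∑ j ∈ hJfin.toFinset, (ν (ball (p j) (ε / 2))).toReal :=
          Finset.sum_le_sum key
      _ ≤ v := hsum
  rw [le_div_iff₀ ha]
  have h1 : (J.ncard : ℝ) * (v * (a / b)) * b ≤ v * b :=
    mul_le_mul_of_nonneg_right hcard hb.le
  have h2 : (J.ncard : ℝ) * (v * (a / b)) * b = (J.ncard : ℝ) * a * v := by
    field_simp
  have h3 : (J.ncard : ℝ) * a * v ≤ b * v := by rw [← h2]; linarith [h1]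
  exact (mul_le_mul_iff_left₀ hvpos).1 h3
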